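/- Let X be a square-integrable random variable on a probability space, and let G ⊂ F be sub-σ-algebras such that X is F-measurable. If E[X·E[X|F] | G] = (E[X|G])² almost surely, then E[(E[X|F])²] = E[(E[X|G])²], and consequently E[X|F] = E[X|G] almost surely. -/

import Mathlib

open MeasureTheory

theorem stmt_9 {Ω : Type*} {m0 : MeasurableSpace Ω} {μ : Measure Ω}
    [IsProbabilityMeasure μ] (m₁ m₂ : MeasurableSpace Ω)
    (h21 : m₂ ≤ m₁) (h10 : m₁ ≤ m0)
    (X : Ω → ℝ) (hX2 : MemLp X 2 μ) (hXmeas : StronglyMeasurable[m₁] X)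
    (hmarkov : μ[fun ω => X ω * (μ[X|m₁]) ω | m₂]
      =ᵐ[μ] fun ω => ((μ[X|m₂]) ω) ^ 2) :
    (∫ ω, ((μ[X|m₁]) ω) ^ 2 ∂μ) = ∫ ω, ((μ[X|m₂]) ω) ^ 2 ∂μ ∧
      μ[X|m₁] =ᵐ[μ] μ[X|m₂] := by
  have hm20 : m₂ ≤ m0 := h21.trans h10
  have hXint : Integrable X μ := hX2.integrable one_le_two
  have hZ : μ[X|m₁] = X := condExp_of_stronglyMeasurable h10 hXmeas hXint
  rw [hZ] at hmarkov ⊢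
  set Y : Ω → ℝ := μ[X|m₂] with hYdef
  -- integrability facts
  have hXsq : Integrable (fun ω => X ω ^ 2) μ := hX2.integrable_sq
  have hXXint : Integrable (fun ω => X ω * X ω) μ := by
    simpa [sq] using hXsq
  have hYsq : Integrable (fun ω => Y ω ^ 2) μ := integrable_condExp.congr hmarkov
  have hYaesm : AEStronglyMeasurable[m0] Y μ :=
    (stronglyMeasurable_condExp.mono hm20).aestronglyMeasurable
  have hYmem : MemLp Y 2 μ := (memLp_two_iff_integrable_sq hYaesm).2 hYsq
  have hXY : Integrable (fun ω => X ω * Y ω) μ := by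
    refine Integrable.mono' (hXsq.add hYsq) (hX2.aestronglyMeasurable.mul hYaesm) ?_
    filter_upwards with ω
    have h1 : |X ω * Y ω| = |X ω| * |Y ω| := abs_mul _ _
    have h2 := sq_abs (X ω)
    have h3 := sq_abs (Y ω)
    have h4 := sq_nonneg (|X ω| - |Y ω|)
    simp only [Real.norm_eq_abs, Pi.add_apply]
    nlinarith [abs_nonneg (X ω), abs_nonneg (Y ω), h1, h2, h3, h4]
  -- first equality: ∫ X² = ∫ Y²
  have hint1 : (∫ ω, X ω ^ 2 ∂μ) = ∫ ω, Y ω ^ 2 ∂μ := by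
    calc (∫ ω, X ω ^ 2 ∂μ) = ∫ ω, X ω * X ω ∂μ := by simp [sq]
      _ = ∫ ω, (μ[fun ω => X ω * X ω|m₂]) ω ∂μ := (integral_condExp hm20).symm
      _ = ∫ ω, Y ω ^ 2 ∂μ := integral_congr_ae hmarkov
  refine ⟨hint1, ?_⟩
  -- ∫ X·Y = ∫ Y²
  have hpull : μ[Y * X|m₂] =ᵐ[μ] Y * μ[X|m₂] :=
    condExp_mul_of_stronglyMeasurable_left stronglyMeasurable_condExp
      (by simpa [Pi.mul_def, mul_comm] using hXY) hXint
  have hint2 : (∫ ω, X ω * Y ω ∂μ) = ∫ ω, Y ω ^ 2 ∂μ := by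
    calc (∫ ω, X ω * Y ω ∂μ) = ∫ ω, (Y * X) ω ∂μ := by
          simp only [Pi.mul_apply]; exact integral_congr_ae (by filter_upwards with ω using mul_comm _ _)
      _ = ∫ ω, (μ[Y * X|m₂]) ω ∂μ := (integral_condExp hm20).symm
      _ = ∫ ω, (Y * μ[X|m₂]) ω ∂μ := integral_congr_ae hpull
      _ = ∫ ω, Y ω ^ 2 ∂μ := by simp [sq, hYdef]
  -- ∫ (X - Y)² = 0
  have hsubmem : MemLp (fun ω => X ω - Y ω) 2 μ := hX2.sub hYmem
  have hsubsq : Integrable (fun ω => (X ω - Y ω) ^ 2) μ := hsubmem.integrable_sq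
  have hzero : (∫ ω, (X ω - Y ω) ^ 2 ∂μ) = 0 := by
    have hexp : (∫ ω, (X ω - Y ω) ^ 2 ∂μ)
        = ∫ ω, (X ω ^ 2 - 2 * (X ω * Y ω) + Y ω ^ 2) ∂μ :=
      integral_congr_ae (Filter.Eventually.of_forall fun ω => by ring)
    have i1 : Integrable (fun ω => X ω ^ 2 - 2 * (X ω * Y ω)) μ := hXsq.sub (hXY.const_mul 2)
    have i2 : Integrable (fun ω => 2 * (X ω * Y ω)) μ := hXY.const_mul 2
    rw [hexp, integral_add i1 hYsq, integral_sub hXsq i2, integral_const_mul, hint1, hint2]; ring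
  have haezero : (fun ω => (X ω - Y ω) ^ 2) =ᵐ[μ] 0 :=
    (integral_eq_zero_iff_of_nonneg (fun ω => sq_nonneg _) hsubsq).1 hzero
  filter_upwards [haezero] with ω hω
  have : (X ω - Y ω) ^ 2 = 0 := hω
  have := pow_eq_zero_iff (n := 2) (by norm_num) |>.1 this
  linarith [this]
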